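/- Let H > 0 and define on Ω = {(ρ,q) ∈ ℝ² : 0 ≤ ρ < 1} the functions w₁(ρ,q) = ρ − q and w₂(ρ,q) = Hq/(1−ρ)^H. Then at every point of Ω: the directional derivative of w₂ in the direction r₁ = (1, −Hq/(1−ρ)) vanishes, and the directional derivative of w₁ in the direction r₂ = (1, 1) vanishes. That is, w₁ = ρ − q is a 1-Riemann invariant and w₂ = Hq/(1−ρ)^H is a 2-Riemann invariant of the system. -/

import Mathlib

/-- w₁ = ρ - q is a 1-Riemann invariant and w₂ = Hq/(1-ρ)^H is a 2-Riemann
invariant: their directional derivatives along r₁ = (1, -Hq/(1-ρ)) and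
r₂ = (1,1), respectively, vanish. -/
theorem stmt5 (H : ℝ) (hH : 0 < H) (ρ q : ℝ) (h0 : 0 ≤ ρ) (h1 : ρ < 1) :
    fderiv ℝ (fun p : ℝ × ℝ => H * p.2 / (1 - p.1) ^ H) (ρ, q) (1, -(H * q / (1 - ρ))) = 0 ∧
    fderiv ℝ (fun p : ℝ × ℝ => p.1 - p.2) (ρ, q) (1, 1) = 0 := by
  have hρ : (0:ℝ) < 1 - ρ := by linarith
  have hne : (1 - ρ) ^ H ≠ 0 := (Real.rpow_pos_of_pos hρ H).ne'
  constructor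
  · -- derivative of x ↦ (1-x)^H at ρ
    have hg : HasDerivAt (fun x : ℝ => (1 - x) ^ H) (-(H * (1 - ρ) ^ (H - 1))) ρ := by
      have ha : HasDerivAt (fun x : ℝ => 1 - x) (-1) ρ := by
        exact (hasDerivAt_id' ρ).const_sub 1
      have hb : HasDerivAt (fun y : ℝ => y ^ H) (H * (1 - ρ) ^ (H - 1)) (1 - ρ) :=
        Real.hasDerivAt_rpow_const (Or.inl hρ.ne')
      have := hb.comp ρ ha; rw [show -(H * (1 - ρ) ^ (H - 1)) = H * (1 - ρ) ^ (H - 1) * -1 by ring]; exact this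
    have hginv : HasDerivAt (fun x : ℝ => ((1 - x) ^ H)⁻¹)
        (-(-(H * (1 - ρ) ^ (H - 1))) / ((1 - ρ) ^ H) ^ 2) ρ := hg.inv hne
    have hinv : HasFDerivAt (fun p : ℝ × ℝ => ((1 - p.1) ^ H)⁻¹)
        ((-(-(H * (1 - ρ) ^ (H - 1))) / ((1 - ρ) ^ H) ^ 2) •
          ContinuousLinearMap.fst ℝ ℝ ℝ) (ρ, q) :=
      HasDerivAt.comp_hasFDerivAt (h₂ := fun x : ℝ => ((1 - x) ^ H)⁻¹) (f := Prod.fst) (ρ, q) hginv (hasFDerivAt_fst : HasFDerivAt (Prod.fst : ℝ × ℝ → ℝ) (ContinuousLinearMap.fst ℝ ℝ ℝ) (ρ, q))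
    have hc : HasFDerivAt (fun p : ℝ × ℝ => H * p.2)
        (H • ContinuousLinearMap.snd ℝ ℝ ℝ) (ρ, q) :=
      (hasFDerivAt_snd).const_mul H
    have hF := hc.mul hinv
    have hF' : HasFDerivAt (fun p : ℝ × ℝ => H * p.2 / (1 - p.1) ^ H)
        ((H * q) • ((-(-(H * (1 - ρ) ^ (H - 1))) / ((1 - ρ) ^ H) ^ 2) •
            ContinuousLinearMap.fst ℝ ℝ ℝ) +
          (((1 - ρ) ^ H)⁻¹) • (H • ContinuousLinearMap.snd ℝ ℝ ℝ)) (ρ, q) := by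
      simpa [div_eq_mul_inv, Pi.mul_def] using hF
    rw [hF'.fderiv]
    have hsub : (1 - ρ) ^ (H - 1) = (1 - ρ) ^ H / (1 - ρ) := by
      rw [Real.rpow_sub hρ, Real.rpow_one]
    simp only [ContinuousLinearMap.add_apply, ContinuousLinearMap.smul_apply,
      ContinuousLinearMap.neg_apply, ContinuousLinearMap.coe_fst',
      ContinuousLinearMap.coe_snd', smul_eq_mul, hsub]
    field_simp
    ring
  · have h := (hasFDerivAt_fst.sub hasFDerivAt_snd :
      HasFDerivAt (fun p : ℝ × ℝ => p.1 - p.2)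
        (ContinuousLinearMap.fst ℝ ℝ ℝ - ContinuousLinearMap.snd ℝ ℝ ℝ) (ρ, q))
    rw [show (fun p : ℝ × ℝ => p.1 - p.2) = Prod.fst - Prod.snd from rfl, h.fderiv]
    simp
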